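/- Let F and G be finite multisets of points in ℝ² and σ > 0. For p = (a,b) ∈ ℝ² write p̄ = (b,a). Define Φ_σ(D)(x) = (1/(4πσ)) Σ_{p ∈ D} (exp(-‖x-p‖²/(4σ)) - exp(-‖x-p̄‖²/(4σ))) as a function on ℝ². Then ∫_{ℝ²} Φ_σ(F)(x) Φ_σ(G)(x) dx = (1/(4πσ)) Σ_{p ∈ F} Σ_{q ∈ G} (exp(-‖p-q‖²/(8σ)) - exp(-‖p-q̄‖²/(8σ))). -/

import Mathlib

open MeasureTheory Real

noncomputable def mk2 (a b : ℝ) : EuclideanSpace ℝ (Fin 2) :=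
  (WithLp.equiv 2 (Fin 2 → ℝ)).symm ![a, b]

/-- Reflection of a point across the diagonal. -/
noncomputable def pbar (p : EuclideanSpace ℝ (Fin 2)) : EuclideanSpace ℝ (Fin 2) :=
  mk2 (p 1) (p 0)

/-- The persistence scale space feature map. -/
noncomputable def Phi (σ : ℝ) (D : Multiset (EuclideanSpace ℝ (Fin 2)))
    (x : EuclideanSpace ℝ (Fin 2)) : ℝ :=
  (1 / (4 * π * σ)) *
    (D.map (fun p => Real.exp (-‖x - p‖ ^ 2 / (4 * σ)) -
      Real.exp (-‖x - pbar p‖ ^ 2 / (4 * σ)))).sum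

abbrev V2 := EuclideanSpace ℝ (Fin 2)

lemma norm_sq_eq (u : V2) : ‖u‖ ^ 2 = u 0 ^ 2 + u 1 ^ 2 := by
  rw [EuclideanSpace.norm_eq, Real.sq_sqrt (by positivity)]
  simp [Fin.sum_univ_two, sq_abs]

lemma pbar_apply0 (p : V2) : pbar p 0 = p 1 := rfl
lemma pbar_apply1 (p : V2) : pbar p 1 = p 0 := rfl

lemma norm_pbar_sub_pbar (p q : V2) : ‖pbar p - pbar q‖ = ‖p - q‖ := by
  have h : ‖pbar p - pbar q‖ ^ 2 = ‖p - q‖ ^ 2 := by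
    rw [norm_sq_eq, norm_sq_eq]
    simp only [PiLp.sub_apply, pbar_apply0, pbar_apply1]
    ring
  nlinarith [norm_nonneg (pbar p - pbar q), norm_nonneg (p - q)]

lemma norm_pbar_sub (p q : V2) : ‖pbar p - q‖ = ‖p - pbar q‖ := by
  have h : ‖pbar p - q‖ ^ 2 = ‖p - pbar q‖ ^ 2 := by
    rw [norm_sq_eq, norm_sq_eq]
    simp only [PiLp.sub_apply, pbar_apply0, pbar_apply1]
    ring
  nlinarith [norm_nonneg (pbar p - q), norm_nonneg (p - pbar q)]

lemma integrable_gauss {b : ℝ} (hb : 0 < b) :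
    Integrable fun v : V2 => rexp (-b * ‖v‖ ^ 2) := by
  have h := (GaussianFourier.integrable_cexp_neg_mul_sq_norm_add (V := V2) (b := (b : ℂ))
    (by simpa using hb) 0 0).norm
  refine h.congr (Filter.Eventually.of_forall fun v => ?_)
  simp only [Complex.norm_exp]
  norm_num
  left
  norm_cast

lemma integral_gauss : ∀ (b : ℝ), 0 < b →
    (∫ v : V2, rexp (-b * ‖v‖ ^ 2)) = π / b := by
  intro b hb
  rw [GaussianFourier.integral_rexp_neg_mul_sq_norm hb]
  norm_num [finrank_euclideanSpace_fin]

lemma gauss_pointwise (σ : ℝ) (hσ : 0 < σ) (p q x : V2) :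
    rexp (-‖x - p‖ ^ 2 / (4 * σ)) * rexp (-‖x - q‖ ^ 2 / (4 * σ))
      = rexp (-‖p - q‖ ^ 2 / (8 * σ))
        * rexp (-(1 / (2 * σ)) * ‖x - (2⁻¹ : ℝ) • (p + q)‖ ^ 2) := by
  set m : V2 := (2⁻¹ : ℝ) • (p + q) with hm
  have h1 : (x - p) + (x - q) = (2 : ℝ) • (x - m) := by
    rw [hm]; module
  have h2 : (x - p) - (x - q) = q - p := by abel
  have hpar := parallelogram_law_with_norm ℝ (x - p) (x - q)
  rw [h1, h2, norm_smul] at hpar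
  have hnq : ‖q - p‖ = ‖p - q‖ := norm_sub_rev q p
  have key : ‖x - p‖ ^ 2 + ‖x - q‖ ^ 2 = 2 * ‖x - m‖ ^ 2 + ‖p - q‖ ^ 2 / 2 := by
    have hnq2 : ‖q - p‖ ^ 2 = ‖p - q‖ ^ 2 := by rw [hnq]
    simp only [Real.norm_ofNat, ← sq] at hpar
    nlinarith [hpar, hnq2]
  rw [← Real.exp_add, ← Real.exp_add]
  congr 1
  field_simp
  linear_combination (-(16 : ℝ)) * key

lemma integrable_gauss_prod (σ : ℝ) (hσ : 0 < σ) (p q : V2) :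
    Integrable fun x : V2 =>
      rexp (-‖x - p‖ ^ 2 / (4 * σ)) * rexp (-‖x - q‖ ^ 2 / (4 * σ)) := by
  have hb : (0 : ℝ) < 1 / (2 * σ) := by positivity
  have h : Integrable fun x : V2 =>
      rexp (-‖p - q‖ ^ 2 / (8 * σ)) * rexp (-(1 / (2 * σ)) * ‖x - (2⁻¹ : ℝ) • (p + q)‖ ^ 2) :=
    (((integrable_gauss hb).comp_sub_right _).const_mul _)
  exact h.congr (Filter.Eventually.of_forall fun x => (gauss_pointwise σ hσ p q x).symm)

lemma gauss_int (σ : ℝ) (hσ : 0 < σ) (p q : V2) :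
    (∫ x : V2, rexp (-‖x - p‖ ^ 2 / (4 * σ)) * rexp (-‖x - q‖ ^ 2 / (4 * σ)))
      = 2 * π * σ * rexp (-‖p - q‖ ^ 2 / (8 * σ)) := by
  have hb : (0 : ℝ) < 1 / (2 * σ) := by positivity
  calc (∫ x : V2, rexp (-‖x - p‖ ^ 2 / (4 * σ)) * rexp (-‖x - q‖ ^ 2 / (4 * σ)))
      = ∫ x : V2, rexp (-‖p - q‖ ^ 2 / (8 * σ))
          * rexp (-(1 / (2 * σ)) * ‖x - (2⁻¹ : ℝ) • (p + q)‖ ^ 2) :=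
        integral_congr_ae (Filter.Eventually.of_forall fun x => gauss_pointwise σ hσ p q x)
    _ = rexp (-‖p - q‖ ^ 2 / (8 * σ))
          * ∫ x : V2, rexp (-(1 / (2 * σ)) * ‖x - (2⁻¹ : ℝ) • (p + q)‖ ^ 2) :=
        integral_const_mul _ _
    _ = rexp (-‖p - q‖ ^ 2 / (8 * σ)) * ∫ x : V2, rexp (-(1 / (2 * σ)) * ‖x‖ ^ 2) := by
        rw [integral_sub_right_eq_self (fun x : V2 => rexp (-(1 / (2 * σ)) * ‖x‖ ^ 2))]
    _ = rexp (-‖p - q‖ ^ 2 / (8 * σ)) * (π / (1 / (2 * σ))) := by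
        rw [integral_gauss _ hb]
    _ = 2 * π * σ * rexp (-‖p - q‖ ^ 2 / (8 * σ)) := by field_simp

lemma multiset_integral_sum {α : Type*} (s : Multiset α) (f : α → V2 → ℝ)
    (hf : ∀ a ∈ s, Integrable (f a)) :
    Integrable (fun x => (s.map (fun a => f a x)).sum) ∧
      (∫ x, (s.map (fun a => f a x)).sum) = (s.map (fun a => ∫ x, f a x)).sum := by
  induction s using Multiset.induction with
  | empty => simp
  | cons a s ih =>
    have ha := hf a (Multiset.mem_cons_self a s)
    have h := ih (fun b hb => hf b (Multiset.mem_cons_of_mem hb))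
    simp only [Multiset.map_cons, Multiset.sum_cons]
    exact ⟨ha.add h.1, by rw [integral_add ha h.1, h.2]⟩

noncomputable def fterm (σ : ℝ) (p x : V2) : ℝ :=
  Real.exp (-‖x - p‖ ^ 2 / (4 * σ)) - Real.exp (-‖x - pbar p‖ ^ 2 / (4 * σ))

noncomputable def gprod (σ : ℝ) (a b x : V2) : ℝ :=
  rexp (-‖x - a‖ ^ 2 / (4 * σ)) * rexp (-‖x - b‖ ^ 2 / (4 * σ))

lemma integrable_gprod (σ : ℝ) (hσ : 0 < σ) (a b : V2) : Integrable (gprod σ a b) :=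
  integrable_gauss_prod σ hσ a b

lemma integrable_term (σ : ℝ) (hσ : 0 < σ) (c : ℝ) (p q : V2) :
    Integrable (fun x : V2 => (c * fterm σ p x) * fterm σ q x) := by
  have ig : ∀ a b, Integrable fun x : V2 => gprod σ a b x := fun a b => integrable_gprod σ hσ a b
  have h : Integrable fun x : V2 => c * (gprod σ p q x - gprod σ p (pbar q) x
      - gprod σ (pbar p) q x + gprod σ (pbar p) (pbar q) x) :=
    ((((ig p q).sub (ig p (pbar q))).sub (ig (pbar p) q)).add
      (ig (pbar p) (pbar q))).const_mul c
  exact h.congr (Filter.Eventually.of_forall fun x => by simp only [fterm, gprod]; ring)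

lemma integral_term (σ : ℝ) (hσ : 0 < σ) (c : ℝ) (p q : V2) :
    (∫ x : V2, (c * fterm σ p x) * fterm σ q x)
      = c * (4 * π * σ) *
          (rexp (-‖p - q‖ ^ 2 / (8 * σ)) - rexp (-‖p - pbar q‖ ^ 2 / (8 * σ))) := by
  have key : (fun x : V2 => (c * fterm σ p x) * fterm σ q x)
      = fun x => c * (gprod σ p q x - gprod σ p (pbar q) x - gprod σ (pbar p) q x
          + gprod σ (pbar p) (pbar q) x) :=
    funext fun x => by simp only [fterm, gprod]; ring
  have ig : ∀ a b, Integrable fun x : V2 => gprod σ a b x := fun a b => integrable_gprod σ hσ a b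
  rw [key]
  rw [integral_const_mul]
  have igA : Integrable fun x : V2 => gprod σ p q x - gprod σ p (pbar q) x :=
    (ig p q).sub (ig p (pbar q))
  have igB : Integrable fun x : V2 =>
      gprod σ p q x - gprod σ p (pbar q) x - gprod σ (pbar p) q x := igA.sub (ig (pbar p) q)
  rw [integral_add igB (ig (pbar p) (pbar q)), integral_sub igA (ig (pbar p) q),
    integral_sub (ig p q) (ig p (pbar q))]
  have g1 : (∫ x : V2, gprod σ p q x) = 2 * π * σ * rexp (-‖p - q‖ ^ 2 / (8 * σ)) :=
    gauss_int σ hσ p q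
  have g2 : (∫ x : V2, gprod σ p (pbar q) x)
      = 2 * π * σ * rexp (-‖p - pbar q‖ ^ 2 / (8 * σ)) := gauss_int σ hσ p (pbar q)
  have g3 : (∫ x : V2, gprod σ (pbar p) q x)
      = 2 * π * σ * rexp (-‖p - pbar q‖ ^ 2 / (8 * σ)) := by
    rw [show (∫ x : V2, gprod σ (pbar p) q x) = 2 * π * σ * rexp (-‖pbar p - q‖ ^ 2 / (8 * σ))
      from gauss_int σ hσ (pbar p) q, norm_pbar_sub]
  have g4 : (∫ x : V2, gprod σ (pbar p) (pbar q) x)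
      = 2 * π * σ * rexp (-‖p - q‖ ^ 2 / (8 * σ)) := by
    rw [show (∫ x : V2, gprod σ (pbar p) (pbar q) x)
      = 2 * π * σ * rexp (-‖pbar p - pbar q‖ ^ 2 / (8 * σ))
      from gauss_int σ hσ (pbar p) (pbar q), norm_pbar_sub_pbar]
  rw [g1, g2, g3, g4]
  ring

/-- closed form for the L²(ℝ²) inner product of feature maps. -/
theorem integral_Phi_mul_Phi (σ : ℝ) (hσ : 0 < σ)
    (F G : Multiset (EuclideanSpace ℝ (Fin 2))) :
    (∫ x : EuclideanSpace ℝ (Fin 2), Phi σ F x * Phi σ G x)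
      = (1 / (4 * π * σ)) *
        (F.map (fun p => (G.map (fun q =>
          Real.exp (-‖p - q‖ ^ 2 / (8 * σ)) -
            Real.exp (-‖p - pbar q‖ ^ 2 / (8 * σ)))).sum)).sum := by
  set c : ℝ := 1 / (4 * π * σ) with hc
  have hcc : c * c * (4 * π * σ) = c := by
    rw [hc]; field_simp
  have hpoint : ∀ x : V2, Phi σ F x * Phi σ G x
      = (F.map (fun p =>
          (G.map (fun q => ((c * c) * fterm σ p x) * fterm σ q x)).sum)).sum := by
    intro x
    have h1 : (F.map (fun p =>
          (G.map (fun q => ((c * c) * fterm σ p x) * fterm σ q x)).sum)).sum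
        = (F.map (fun p =>
            ((c * c) * fterm σ p x) * (G.map (fun q => fterm σ q x)).sum)).sum := by
      exact congrArg Multiset.sum
        (Multiset.map_congr rfl fun p _ => Multiset.sum_map_mul_left ..)
    rw [h1, Multiset.sum_map_mul_right, Multiset.sum_map_mul_left]
    simp only [Phi, fterm, ← hc]
    ring
  rw [integral_congr_ae (Filter.Eventually.of_forall hpoint)]
  rw [(multiset_integral_sum F _ (fun p _ =>
    (multiset_integral_sum G _ (fun q _ => integrable_term σ hσ (c * c) p q)).1)).2]
  have hstep : (F.map (fun p => ∫ x : V2,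
        (G.map (fun q => ((c * c) * fterm σ p x) * fterm σ q x)).sum)).sum
      = (F.map (fun p => (G.map (fun q => c * (rexp (-‖p - q‖ ^ 2 / (8 * σ)) -
          rexp (-‖p - pbar q‖ ^ 2 / (8 * σ))))).sum)).sum := by
    refine congrArg Multiset.sum (Multiset.map_congr rfl fun p _ => ?_)
    rw [(multiset_integral_sum G _ (fun q _ => integrable_term σ hσ (c * c) p q)).2]
    refine congrArg Multiset.sum (Multiset.map_congr rfl fun q _ => ?_)
    rw [integral_term σ hσ (c * c) p q, hcc]
  rw [hstep]
  simp only [Multiset.sum_map_mul_left]
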